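/- There exists γ₀ ∈ (0,1] such that the following holds. Let X be a uniformly convex real Banach space, let C be a nonempty compact convex subset of X, let γ ∈ (0, γ₀] and μ ∈ [0,1/2] with 2μ ≤ γ, and let T₁, T₂, T₃ : C → C be pairwise commuting mappings each satisfying condition B_{γ,μ} on C. Fix λ ∈ (0,1) and a sequence {α_n} in [0, 1/2] with liminf_{n→∞} α_n = 0, limsup_{n→∞} α_n > 0, and lim_{n→∞}(α_{n+1} − α_n) = 0. For x₀ ∈ C define {x_n} by x_{n+1} = λ(1 − α_n − α_n²) T₁ x_n + λ α_n T₂ x_n + λ α_n² T₃ x_n + (1 − λ) x_n for n ≥ 0. Then {x_n} converges strongly (in norm) to a point z ∈ C with T₁ z = T₂ z = T₃ z = z. -/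

import Mathlib

universe u

open Filter Set

set_option linter.unusedSectionVars false
set_option linter.unusedVariables false
set_option maxHeartbeats 2000000

section Aux

variable {X : Type u} [NormedAddCommGroup X] [NormedSpace ℝ X]

/-- Condition `B_{γ,μ}` on a set `C`. -/
def CondB (C : Set X) (T : X → X) (γ μ : ℝ) : Prop :=
  ∀ x ∈ C, ∀ y ∈ C,
    γ * ‖x - T x‖ ≤ ‖x - y‖ + μ * ‖y - T y‖ →
      ‖T x - T y‖ ≤ (1 - γ) * ‖x - y‖ + μ * (‖x - T y‖ + ‖y - T x‖)

variable {C : Set X} {T : X → X} {γ μ : ℝ}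

lemma condB_iterate_le (hγ0 : 0 < γ) (hγ : γ ≤ 1 / 2) (hμ0 : 0 ≤ μ) (hμγ : 2 * μ ≤ γ)
    (hT : Set.MapsTo T C C) (hB : CondB C T γ μ) {x : X} (hx : x ∈ C) :
    ‖T x - T (T x)‖ ≤ ‖x - T x‖ := by
  have h1 := hB x hx (T x) (hT hx) (by
    nlinarith [norm_nonneg (x - T x), norm_nonneg (T x - T (T x))])
  have h2 : ‖x - T (T x)‖ ≤ ‖x - T x‖ + ‖T x - T (T x)‖ := by
    simpa [dist_eq_norm] using dist_triangle x (T x) (T (T x))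
  simp only [sub_self, norm_zero, add_zero] at h1
  nlinarith [norm_nonneg (x - T x), norm_nonneg (T x - T (T x))]

lemma condB_fixed_quasi (hγ0 : 0 < γ) (hγ : γ ≤ 1 / 2) (hμ0 : 0 ≤ μ) (hμγ : 2 * μ ≤ γ)
    (hB : CondB C T γ μ) {p y : X} (hp : p ∈ C) (hfix : T p = p) (hy : y ∈ C) :
    ‖T y - p‖ ≤ ‖y - p‖ := by
  have h := hB p hp y hy (by
    rw [hfix, sub_self, norm_zero, mul_zero]
    positivity)
  rw [hfix] at h
  rw [norm_sub_rev y p]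
  rw [norm_sub_rev (T y) p]
  have hyp : ‖y - p‖ = ‖p - y‖ := norm_sub_rev _ _
  rw [hyp] at h
  nlinarith [norm_nonneg (p - T y), norm_nonneg (p - y)]

lemma condB_dichotomy (hγ0 : 0 < γ) (hγ : γ ≤ 1 / 2) (hμ0 : 0 ≤ μ) (hμγ : 2 * μ ≤ γ)
    (hT : Set.MapsTo T C C) (hB : CondB C T γ μ) {x w : X} (hx : x ∈ C) (hw : w ∈ C) :
    γ * ‖x - T x‖ ≤ ‖x - w‖ + μ * ‖w - T w‖ ∨
      γ * ‖T x - T (T x)‖ ≤ ‖T x - w‖ + μ * ‖w - T w‖ := by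
  by_contra hcon
  push_neg at hcon
  obtain ⟨h1, h2⟩ := hcon
  have h3 := condB_iterate_le hγ0 hγ hμ0 hμγ hT hB hx
  have h4 : ‖x - T x‖ ≤ ‖x - w‖ + ‖T x - w‖ := by
    have := dist_triangle x w (T x)
    simp only [dist_eq_norm] at this
    rw [norm_sub_rev w (T x)] at this
    linarith
  have h5 : γ * ‖T x - T (T x)‖ ≤ γ * ‖x - T x‖ :=
    mul_le_mul_of_nonneg_left h3 hγ0.le
  nlinarith [norm_nonneg (w - T w), norm_nonneg (x - T x)]


lemma condB_demiclosed (hγ0 : 0 < γ) (hγ : γ ≤ 1 / 2) (hμ0 : 0 ≤ μ) (hμγ : 2 * μ ≤ γ)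
    (hT : Set.MapsTo T C C) (hB : CondB C T γ μ) {y : ℕ → X} (hy : ∀ j, y j ∈ C) {w : X}
    (hw : w ∈ C) (hlim : Filter.Tendsto y Filter.atTop (nhds w))
    (hd : Filter.Tendsto (fun j => ‖y j - T (y j)‖) Filter.atTop (nhds 0)) :
    T w = w := by
  have hμ4 : μ ≤ 1 / 4 := by linarith
  have key : ∀ j, (1 - μ) * ‖w - T w‖ ≤ 3 * ‖y j - w‖ + 4 * ‖y j - T (y j)‖ := by
    intro j
    have ha0 : (0:ℝ) ≤ ‖y j - w‖ := norm_nonneg _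
    have hd0 : (0:ℝ) ≤ ‖y j - T (y j)‖ := norm_nonneg _
    have hW0 : (0:ℝ) ≤ ‖w - T w‖ := norm_nonneg _
    rcases condB_dichotomy hγ0 hγ hμ0 hμγ hT hB (hy j) hw with hpre | hpre
    · have h := hB (y j) (hy j) w hw hpre
      have t1 : ‖w - T w‖ ≤ ‖w - y j‖ + ‖y j - T (y j)‖ + ‖T (y j) - T w‖ := by
        have a := dist_triangle w (y j) (T (y j))
        have b := dist_triangle w (T (y j)) (T w)
        simp only [dist_eq_norm] at a b
        linarith
      have t2 : ‖y j - T w‖ ≤ ‖y j - w‖ + ‖w - T w‖ := by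
        have := dist_triangle (y j) w (T w); simpa [dist_eq_norm] using this
      have t3 : ‖w - T (y j)‖ ≤ ‖w - y j‖ + ‖y j - T (y j)‖ := by
        have := dist_triangle w (y j) (T (y j)); simpa [dist_eq_norm] using this
      have hrev : ‖w - y j‖ = ‖y j - w‖ := norm_sub_rev _ _
      rw [hrev] at t1 t3
      nlinarith [mul_le_mul_of_nonneg_left t2 hμ0, mul_le_mul_of_nonneg_left t3 hμ0,
        mul_nonneg hγ0.le ha0]
    · have hu : T (y j) ∈ C := hT (hy j)
      have h := hB (T (y j)) hu w hw hpre
      have hit : ‖T (y j) - T (T (y j))‖ ≤ ‖y j - T (y j)‖ :=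
        condB_iterate_le hγ0 hγ hμ0 hμγ hT hB (hy j)
      have t0 : ‖T (y j) - w‖ ≤ ‖y j - T (y j)‖ + ‖y j - w‖ := by
        have := dist_triangle (T (y j)) (y j) w
        simp only [dist_eq_norm] at this
        rw [norm_sub_rev (T (y j)) (y j)] at this
        linarith
      have t1 : ‖w - T w‖ ≤ ‖w - T (y j)‖ + ‖T (y j) - T (T (y j))‖ + ‖T (T (y j)) - T w‖ := by
        have a := dist_triangle w (T (y j)) (T (T (y j)))
        have b := dist_triangle w (T (T (y j))) (T w)
        simp only [dist_eq_norm] at a b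
        linarith
      have t2 : ‖T (y j) - T w‖ ≤ ‖T (y j) - w‖ + ‖w - T w‖ := by
        have := dist_triangle (T (y j)) w (T w); simpa [dist_eq_norm] using this
      have t3 : ‖w - T (T (y j))‖ ≤ ‖w - T (y j)‖ + ‖T (y j) - T (T (y j))‖ := by
        have := dist_triangle w (T (y j)) (T (T (y j))); simpa [dist_eq_norm] using this
      have hrev : ‖w - T (y j)‖ = ‖T (y j) - w‖ := norm_sub_rev _ _
      rw [hrev] at t1 t3
      nlinarith [mul_le_mul_of_nonneg_left t2 hμ0, mul_le_mul_of_nonneg_left t3 hμ0,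
        mul_nonneg hγ0.le (norm_nonneg (T (y j) - w)), norm_nonneg (T (y j) - w),
        norm_nonneg (T (y j) - T (T (y j)))]
  have hlim1 : Filter.Tendsto (fun j => ‖y j - w‖) Filter.atTop (nhds 0) := by
    rw [← tendsto_iff_norm_sub_tendsto_zero] at *
    exact hlim
  have h0 : Filter.Tendsto (fun j => 3 * ‖y j - w‖ + 4 * ‖y j - T (y j)‖)
      Filter.atTop (nhds 0) := by
    have := (hlim1.const_mul 3).add (hd.const_mul 4)
    simpa using this
  have hle : (1 - μ) * ‖w - T w‖ ≤ 0 := ge_of_tendsto h0 (Filter.Eventually.of_forall key)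
  have hnorm : ‖w - T w‖ ≤ 0 := by nlinarith [norm_nonneg (w - T w)]
  have : w - T w = 0 := norm_le_zero_iff.mp hnorm
  exact (sub_eq_zero.mp this).symm


end Aux

section AuxUC

variable {X : Type u} [NormedAddCommGroup X] [NormedSpace ℝ X] [UniformConvexSpace X]
variable {C : Set X} {T : X → X} {γ μ : ℝ}

lemma uc_scaled {ε : ℝ} (hε : 0 < ε) :
    ∃ δ : ℝ, 0 < δ ∧ δ ≤ 1 ∧ ∀ R : ℝ, 0 < R → ∀ u v : X, ‖u‖ ≤ R → ‖v‖ ≤ R →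
      ε * R ≤ ‖u - v‖ → ‖u + v‖ ≤ (2 - δ) * R := by
  obtain ⟨δ, hδ, h⟩ := exists_forall_closed_ball_dist_add_le_two_sub X hε
  refine ⟨min δ 1, lt_min hδ one_pos, min_le_right _ _, ?_⟩
  intro R hR u v hu hv huv
  have hRinv : (0:ℝ) ≤ R⁻¹ := inv_nonneg.mpr hR.le
  have hu' : ‖R⁻¹ • u‖ ≤ 1 := by
    rw [norm_smul_of_nonneg hRinv]
    rw [inv_mul_le_iff₀ hR, mul_one]
    exact hu
  have hv' : ‖R⁻¹ • v‖ ≤ 1 := by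
    rw [norm_smul_of_nonneg hRinv]
    rw [inv_mul_le_iff₀ hR, mul_one]
    exact hv
  have hsep : ε ≤ ‖R⁻¹ • u - R⁻¹ • v‖ := by
    rw [← smul_sub, norm_smul_of_nonneg hRinv]
    rw [le_inv_mul_iff₀ hR]
    linarith [huv]
  have hres := h hu' hv' hsep
  rw [← smul_add, norm_smul_of_nonneg hRinv] at hres
  have h2 : ‖u + v‖ ≤ (2 - δ) * R := by
    rw [inv_mul_le_iff₀ hR] at hres
    linarith [hres]
  have : (2 - δ) * R ≤ (2 - min δ 1) * R := by
    have : min δ 1 ≤ δ := min_le_left _ _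
    nlinarith
  linarith

lemma uc_pair {r η δ₀ : ℝ} (hr : 0 < r) (hη : 0 < η) (hδ₀ : 0 < δ₀) :
    ∃ ε : ℝ, 0 < ε ∧ ∀ (u v w : X) (c d : ℝ), δ₀ ≤ c → δ₀ ≤ d → c + d ≤ 1 →
      ‖u‖ ≤ r + ε → ‖v‖ ≤ r + ε → ‖w‖ ≤ (1 - (c + d)) * (r + ε) →
      r - ε ≤ ‖c • u + d • v + w‖ → ‖u - v‖ ≤ η := by
  have hε₁ : (0:ℝ) < η / (r + 1) := by positivity
  obtain ⟨δ, hδ0, hδ1, hUC⟩ := uc_scaled (X := X) hε₁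
  refine ⟨min 1 (δ₀ * δ * r / 4), lt_min one_pos (by positivity), ?_⟩
  intro u v w c d hc hd hcd hu hv hw hsum
  set ε := min 1 (δ₀ * δ * r / 4) with hεdef
  have hε1 : ε ≤ 1 := min_le_left _ _
  have hε2 : ε ≤ δ₀ * δ * r / 4 := min_le_right _ _
  have hε0 : 0 < ε := lt_min one_pos (by positivity)
  by_contra hcontra
  push_neg at hcontra
  have hR : (0:ℝ) < r + ε := by linarith
  have hsep : (η / (r + 1)) * (r + ε) ≤ ‖u - v‖ := by
    have h1 : (η / (r + 1)) * (r + ε) ≤ η := by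
      rw [div_mul_eq_mul_div, div_le_iff₀ (by linarith : (0:ℝ) < r + 1)]
      nlinarith
    linarith
  have hkey : ‖c • u + d • v‖ ≤ (c + d) * (r + ε) - δ₀ * δ * (r + ε) := by
    have hδR : 0 ≤ δ * (r + ε) := by positivity
    rcases le_total c d with hle | hle
    · have heq : c • u + d • v = c • (u + v) + (d - c) • v := by module
      have hsum2 : ‖u + v‖ ≤ (2 - δ) * (r + ε) := hUC _ hR u v hu hv hsep
      calc ‖c • u + d • v‖ = ‖c • (u + v) + (d - c) • v‖ := by rw [heq]
        _ ≤ ‖c • (u + v)‖ + ‖(d - c) • v‖ := norm_add_le _ _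
        _ = c * ‖u + v‖ + (d - c) * ‖v‖ := by
            rw [norm_smul_of_nonneg (by linarith), norm_smul_of_nonneg (by linarith)]
        _ ≤ c * ((2 - δ) * (r + ε)) + (d - c) * (r + ε) := by
            have h2δ : (0:ℝ) ≤ 2 - δ := by linarith
            have := mul_le_mul_of_nonneg_left hsum2 (by linarith : (0:ℝ) ≤ c)
            have := mul_le_mul_of_nonneg_left hv (by linarith : (0:ℝ) ≤ d - c)
            linarith
        _ ≤ (c + d) * (r + ε) - δ₀ * δ * (r + ε) := by nlinarith [mul_le_mul_of_nonneg_right hc hδR]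
    · have heq : c • u + d • v = d • (v + u) + (c - d) • u := by module
      have hsep' : (η / (r + 1)) * (r + ε) ≤ ‖v - u‖ := by rw [norm_sub_rev]; exact hsep
      have hsum2 : ‖v + u‖ ≤ (2 - δ) * (r + ε) := hUC _ hR v u hv hu hsep'
      calc ‖c • u + d • v‖ = ‖d • (v + u) + (c - d) • u‖ := by rw [heq]
        _ ≤ ‖d • (v + u)‖ + ‖(c - d) • u‖ := norm_add_le _ _
        _ = d * ‖v + u‖ + (c - d) * ‖u‖ := by
            rw [norm_smul_of_nonneg (by linarith), norm_smul_of_nonneg (by linarith)]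
        _ ≤ d * ((2 - δ) * (r + ε)) + (c - d) * (r + ε) := by
            have h2δ : (0:ℝ) ≤ 2 - δ := by linarith
            have := mul_le_mul_of_nonneg_left hsum2 (by linarith : (0:ℝ) ≤ d)
            have := mul_le_mul_of_nonneg_left hu (by linarith : (0:ℝ) ≤ c - d)
            linarith
        _ ≤ (c + d) * (r + ε) - δ₀ * δ * (r + ε) := by nlinarith [mul_le_mul_of_nonneg_right hd hδR]
  have htri : r - ε ≤ ‖c • u + d • v‖ + ‖w‖ := le_trans hsum (norm_add_le _ _)
  nlinarith [mul_nonneg (mul_nonneg hδ₀.le hδ0.le) hε0.le]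


lemma condB_exists_fixed (hComp : IsCompact C) (hne : C.Nonempty)
    (hγ0 : 0 < γ) (hγ : γ ≤ 1 / 2) (hμ0 : 0 ≤ μ) (hμγ : 2 * μ ≤ γ)
    (hT : Set.MapsTo T C C) (hB : CondB C T γ μ) : ∃ z ∈ C, T z = z := by
  obtain ⟨x₀, hx₀⟩ := hne
  set z : ℕ → X := fun k => T^[k] x₀ with hzdef
  have hzsucc : ∀ k, z (k + 1) = T (z k) := fun k => Function.iterate_succ_apply' T k x₀
  have hzC : ∀ k, z k ∈ C := by
    intro k
    induction k with
    | zero => simpa [hzdef] using hx₀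
    | succ k ih => rw [hzsucc]; exact hT ih
  set A : ℕ → X := fun k => z k - T (z k) with hAdef
  set D : ℕ → ℝ := fun k => ‖A k‖ with hDdef
  have hDA : ∀ k, D k = ‖z k - T (z k)‖ := fun k => rfl
  have hAz : ∀ k, A k = z k - z (k + 1) := by intro k; rw [hzsucc]
  have hDanti : ∀ k, D (k + 1) ≤ D k := by
    intro k
    show ‖z (k+1) - T (z (k+1))‖ ≤ ‖z k - T (z k)‖
    rw [hzsucc k]
    exact condB_iterate_le hγ0 hγ hμ0 hμγ hT hB (hzC k)
  have hDmono : Antitone D := antitone_nat_of_succ_le hDanti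
  have hDnn : ∀ k, 0 ≤ D k := fun k => norm_nonneg _
  have hbdd : BddBelow (Set.range D) := ⟨0, by rintro _ ⟨k, rfl⟩; exact hDnn k⟩
  -- key inequality from condition B along the orbit
  have hDineq : ∀ k, D (k + 1) ≤ (1 - γ) * D k + μ * ‖A k + A (k + 1)‖ := by
    intro k
    have hpre : γ * ‖z k - T (z k)‖ ≤ ‖z k - z (k + 1)‖ + μ * ‖z (k + 1) - T (z (k + 1))‖ := by
      rw [← hAz, ← hDA]
      have := hDnn k
      nlinarith [norm_nonneg (z (k+1) - T (z (k+1)))]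
    have h := hB (z k) (hzC k) (z (k + 1)) (hzC (k + 1)) hpre
    rw [← hzsucc k] at h
    simp only [sub_self, norm_zero, add_zero] at h
    have hveq : z k - T (z (k + 1)) = A k + A (k + 1) := by
      show z k - T (z (k+1)) = (z k - T (z k)) + (z (k+1) - T (z (k+1)))
      rw [hzsucc k]
      abel
    rw [hveq] at h
    have e1 : ‖z (k+1) - T (z (k+1))‖ = D (k+1) := rfl
    have e2 : ‖z k - z (k+1)‖ = D k := by rw [← hAz]
    rw [e1, e2] at h
    exact h
  -- infimum is zero
  have hL0 : (⨅ k, D k) = 0 := by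
    set L := ⨅ k, D k with hLdef
    have hLnn : 0 ≤ L := le_ciInf hDnn
    rcases eq_or_lt_of_le hLnn with h0 | hLpos
    · exact h0.symm
    exfalso
    have hLle : ∀ k, L ≤ D k := fun k => ciInf_le hbdd k
    -- bound on C
    obtain ⟨M, hM⟩ := Metric.isBounded_iff.mp hComp.isBounded
    have hMnn : (0:ℝ) ≤ M := le_trans dist_nonneg (hM hx₀ hx₀)
    have hznorm : ∀ j k : ℕ, ‖z j - z k‖ ≤ M := by
      intro j k; rw [← dist_eq_norm]; exact hM (hzC j) (hzC k)
    -- choose m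
    obtain ⟨m, hm⟩ := exists_nat_gt (M / L)
    have hmL : M < m * L := by
      rwa [div_lt_iff₀ hLpos] at hm
    have hm0 : (0:ℝ) < m := by
      by_contra hc
      push_neg at hc
      nlinarith
    set η : ℝ := (m * L - M) / ((m:ℝ)^2 + 1) with hηdef
    have hη : 0 < η := by
      apply div_pos (by linarith) (by positivity)
    have hηeq : η * ((m:ℝ)^2 + 1) = m * L - M := by
      rw [hηdef, div_mul_cancel₀]
      positivity
    have hD0pos : 0 < D 0 := lt_of_lt_of_le hLpos (hLle 0)
    obtain ⟨δ, hδ0, hδ1, hUC⟩ := uc_scaled (X := X) (ε := η / D 0) (by positivity)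
    set σ : ℝ := δ * γ / 8 with hσdef
    have hσ0 : 0 < σ := by positivity
    obtain ⟨k₁, hk₁⟩ := exists_lt_of_ciInf_lt (show (⨅ k, D k) < L + L * σ by
      rw [← hLdef]; nlinarith)
    -- consecutive displacement vectors align
    have hstep : ∀ k, k₁ ≤ k → ‖A k - A (k + 1)‖ ≤ η := by
      intro k hk
      by_contra hcon
      push_neg at hcon
      have hDk1 : D k ≤ D k₁ := hDmono hk
      have hDkpos : 0 < D k := lt_of_lt_of_le hLpos (hLle k)
      have hsep : (η / D 0) * D k ≤ ‖A k - A (k + 1)‖ := by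
        have hDk0 : D k ≤ D 0 := hDmono (Nat.zero_le k)
        have : (η / D 0) * D k ≤ η := by
          rw [div_mul_eq_mul_div, div_le_iff₀ hD0pos]
          nlinarith
        linarith
      have hW := hUC (D k) hDkpos (A k) (A (k + 1)) (le_refl _) (hDanti k) hsep
      have hki := hDineq k
      have hLk1 := hLle (k + 1)
      have hk₁' : D k < L + L * σ := lt_of_le_of_lt hDk1 hk₁
      -- L ≤ D (k+1) ≤ (1-γ)Dk + μ(2-δ)Dk ≤ (1 - γδ/2) Dk < (1 - γδ/2)(L + Lσ) < L
      have hμW : μ * ‖A k + A (k + 1)‖ ≤ μ * ((2 - δ) * D k) :=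
        mul_le_mul_of_nonneg_left hW hμ0
      have hμhalf : μ ≤ γ / 2 := by linarith
      have h2δ : (0:ℝ) ≤ 2 - δ := by linarith
      nlinarith [mul_le_mul_of_nonneg_right hμhalf (mul_nonneg h2δ hDkpos.le),
        mul_pos (mul_pos hδ0 hγ0) hDkpos, hσ0, hδ1, hγ]
    -- alignment over gaps
    have halign : ∀ j k, k₁ ≤ k → ‖A (k + j) - A k‖ ≤ j * η := by
      intro j
      induction j with
      | zero => intro k hk; simp
      | succ j ih =>
        intro k hk
        have h1 := hstep (k + j) (le_trans hk (Nat.le_add_right _ _))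
        have h2 := ih k hk
        have tri : ‖A (k + (j+1)) - A k‖ ≤ ‖A (k + j) - A (k + j + 1)‖ + ‖A (k + j) - A k‖ := by
          have := dist_triangle (A (k + j + 1)) (A (k + j)) (A k)
          simp only [dist_eq_norm] at this
          rw [norm_sub_rev (A (k + j + 1)) (A (k + j))] at this
          have he : k + (j + 1) = k + j + 1 := by omega
          rw [he]
          linarith
        push_cast
        push_cast at h2
        linarith
    -- telescoping estimate
    have hsumest : ∀ mm : ℕ, ‖(z k₁ - z (k₁ + mm)) - (mm : ℝ) • A k₁‖ ≤ (mm:ℝ)^2 * η := by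
      intro mm
      induction mm with
      | zero => simp
      | succ mm ih =>
        have hveq : z k₁ - z (k₁ + (mm + 1)) - ((mm:ℝ) + 1) • A k₁ =
            ((z k₁ - z (k₁ + mm)) - (mm:ℝ) • A k₁) + (A (k₁ + mm) - A k₁) := by
          have : z (k₁ + mm) - z (k₁ + mm + 1) = A (k₁ + mm) := (hAz (k₁ + mm)).symm
          have he : k₁ + (mm + 1) = k₁ + mm + 1 := by omega
          rw [he, ← this]
          module
        push_cast
        push_cast at ih
        rw [hveq]
        have h2 := halign mm k₁ (le_refl _)
        have htri := norm_add_le ((z k₁ - z (k₁ + mm)) - (mm:ℝ) • A k₁) (A (k₁ + mm) - A k₁)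
        push_cast at h2
        have hmm : (0:ℝ) ≤ (mm:ℝ) := Nat.cast_nonneg _
        nlinarith [hη.le]
    -- final contradiction
    have hfin := hsumest m
    have hnormA : ‖(m:ℝ) • A k₁‖ = (m:ℝ) * D k₁ := by
      rw [norm_smul_of_nonneg (Nat.cast_nonneg _)]
    have hlow : (m:ℝ) * L - (m:ℝ)^2 * η ≤ ‖z k₁ - z (k₁ + m)‖ := by
      have htri : ‖(m:ℝ) • A k₁‖ - ‖(z k₁ - z (k₁ + m)) - (m:ℝ) • A k₁‖ ≤ ‖z k₁ - z (k₁ + m)‖ := by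
        have := norm_sub_norm_le ((m:ℝ) • A k₁) (((m:ℝ) • A k₁) - (z k₁ - z (k₁ + m)))
        have he : (m:ℝ) • A k₁ - ((m:ℝ) • A k₁ - (z k₁ - z (k₁ + m))) = z k₁ - z (k₁ + m) := by
          abel
        rw [he] at this
        rw [norm_sub_rev ((m:ℝ) • A k₁) (z k₁ - z (k₁ + m))] at this
        linarith
      have hDk₁L : L ≤ D k₁ := hLle k₁
      have : (m:ℝ) * L ≤ (m:ℝ) * D k₁ := mul_le_mul_of_nonneg_left hDk₁L (by positivity)
      rw [hnormA] at htri
      linarith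
    have hup := hznorm k₁ (k₁ + m)
    -- m*L - m^2*η > M  since η*(m^2+1) = m*L - M
    nlinarith [hη.le, hmL]
  -- conclude: approximate fixed point sequence
  have hDtend : Filter.Tendsto D Filter.atTop (nhds 0) := by
    have := tendsto_atTop_ciInf hDmono hbdd
    rwa [hL0] at this
  obtain ⟨w, hwC, φ, hφ, hφlim⟩ := hComp.tendsto_subseq hzC
  have hdsub : Filter.Tendsto (fun j => ‖(fun j => z (φ j)) j - T ((fun j => z (φ j)) j)‖)
      Filter.atTop (nhds 0) := by
    have : Filter.Tendsto (fun j => D (φ j)) Filter.atTop (nhds 0) :=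
      hDtend.comp hφ.tendsto_atTop
    exact this
  exact ⟨w, hwC, condB_demiclosed hγ0 hγ hμ0 hμγ hT hB (fun j => hzC (φ j)) hwC hφlim hdsub⟩


/-- closedness of the fixed point set inside `C` -/
lemma fixedSet_isClosed (hComp : IsCompact C)
    (hγ0 : 0 < γ) (hγ : γ ≤ 1 / 2) (hμ0 : 0 ≤ μ) (hμγ : 2 * μ ≤ γ)
    (hB : CondB C T γ μ) : IsClosed {p : X | p ∈ C ∧ T p = p} := by
  apply IsSeqClosed.isClosed
  intro u p hu hup
  have hpC : p ∈ C := hComp.isClosed.isSeqClosed (fun n => (hu n).1) hup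
  refine ⟨hpC, ?_⟩
  have key : ∀ n, ‖T p - p‖ ≤ 2 * ‖u n - p‖ := by
    intro n
    have hq : ‖T p - u n‖ ≤ ‖p - u n‖ :=
      condB_fixed_quasi hγ0 hγ hμ0 hμγ hB (hu n).1 (hu n).2 hpC
    have tri : ‖T p - p‖ ≤ ‖T p - u n‖ + ‖u n - p‖ := by
      have := dist_triangle (T p) (u n) p
      simpa [dist_eq_norm] using this
    have : ‖p - u n‖ = ‖u n - p‖ := norm_sub_rev _ _
    linarith
  have hlim : Filter.Tendsto (fun n => 2 * ‖u n - p‖) Filter.atTop (nhds 0) := by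
    have h1 : Filter.Tendsto (fun n => ‖u n - p‖) Filter.atTop (nhds 0) := by
      rw [← tendsto_iff_norm_sub_tendsto_zero] at *
      exact hup
    have := h1.const_mul 2
    simpa using this
  have : ‖T p - p‖ ≤ 0 := ge_of_tendsto hlim (Filter.Eventually.of_forall key)
  have : T p - p = 0 := norm_le_zero_iff.mp this
  exact sub_eq_zero.mp this


end AuxUC

/-- For sufficiently small `γ`, the iteration for three pairwise commuting
maps satisfying condition `B_{γ,μ}` on a compact convex subset of a uniformly
convex Banach space converges strongly to a common fixed point. -/
theorem condB_three_commuting_convergence :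
    ∃ γ₀ : ℝ, γ₀ ∈ Set.Ioc (0 : ℝ) 1 ∧
      ∀ (X : Type u) [NormedAddCommGroup X] [NormedSpace ℝ X] [CompleteSpace X]
        [UniformConvexSpace X]
        (C : Set X), C.Nonempty → Convex ℝ C → IsCompact C →
        ∀ γ μ : ℝ, γ ∈ Set.Ioc (0 : ℝ) γ₀ → μ ∈ Set.Icc (0 : ℝ) (1 / 2) →
          2 * μ ≤ γ →
        ∀ T₁ T₂ T₃ : X → X,
          Set.MapsTo T₁ C C → Set.MapsTo T₂ C C → Set.MapsTo T₃ C C →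
          (∀ x ∈ C, T₁ (T₂ x) = T₂ (T₁ x)) →
          (∀ x ∈ C, T₁ (T₃ x) = T₃ (T₁ x)) →
          (∀ x ∈ C, T₂ (T₃ x) = T₃ (T₂ x)) →
          (∀ x ∈ C, ∀ y ∈ C,
            γ * ‖x - T₁ x‖ ≤ ‖x - y‖ + μ * ‖y - T₁ y‖ →
              ‖T₁ x - T₁ y‖ ≤ (1 - γ) * ‖x - y‖
                + μ * (‖x - T₁ y‖ + ‖y - T₁ x‖)) →
          (∀ x ∈ C, ∀ y ∈ C,
            γ * ‖x - T₂ x‖ ≤ ‖x - y‖ + μ * ‖y - T₂ y‖ →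
              ‖T₂ x - T₂ y‖ ≤ (1 - γ) * ‖x - y‖
                + μ * (‖x - T₂ y‖ + ‖y - T₂ x‖)) →
          (∀ x ∈ C, ∀ y ∈ C,
            γ * ‖x - T₃ x‖ ≤ ‖x - y‖ + μ * ‖y - T₃ y‖ →
              ‖T₃ x - T₃ y‖ ≤ (1 - γ) * ‖x - y‖
                + μ * (‖x - T₃ y‖ + ‖y - T₃ x‖)) →
        ∀ l : ℝ, l ∈ Set.Ioo (0 : ℝ) 1 →
        ∀ α : ℕ → ℝ, (∀ n, α n ∈ Set.Icc (0 : ℝ) (1 / 2)) →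
          Filter.liminf α Filter.atTop = 0 →
          0 < Filter.limsup α Filter.atTop →
          Filter.Tendsto (fun n => α (n + 1) - α n) Filter.atTop (nhds 0) →
        ∀ x : ℕ → X, x 0 ∈ C →
          (∀ n : ℕ, x (n + 1) =
            (l * (1 - α n - (α n) ^ 2)) • T₁ (x n) + (l * α n) • T₂ (x n)
              + (l * (α n) ^ 2) • T₃ (x n) + (1 - l) • x n) →
          ∃ z ∈ C, T₁ z = z ∧ T₂ z = z ∧ T₃ z = z ∧
            Filter.Tendsto x Filter.atTop (nhds z) := by
  refine ⟨1/2, ⟨by norm_num, by norm_num⟩, ?_⟩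
  intro X _ _ _ _ C hne hconv hcomp γ μ hγIoc hμIcc hμγ T₁ T₂ T₃ hT₁ hT₂ hT₃ h12 h13 h23
    hB₁ hB₂ hB₃ l hl α hα hlinf hlsup hstep x hx0 hrec
  obtain ⟨hγ0, hγhalf⟩ := hγIoc
  obtain ⟨hμ0, hμhalf⟩ := hμIcc
  obtain ⟨hl0, hl1⟩ := hl
  have hB₁' : CondB C T₁ γ μ := hB₁
  have hB₂' : CondB C T₂ γ μ := hB₂
  have hB₃' : CondB C T₃ γ μ := hB₃
  have hα0 : ∀ n, 0 ≤ α n := fun n => (hα n).1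
  have hα2 : ∀ n, α n ≤ 1 / 2 := fun n => (hα n).2
  have hquarter : ∀ n, 1/4 ≤ 1 - α n - (α n)^2 := by
    intro n; nlinarith [hα0 n, hα2 n]
  have hc1nn : ∀ n, (0:ℝ) ≤ l * (1 - α n - (α n) ^ 2) :=
    fun n => mul_nonneg hl0.le (by linarith [hquarter n])
  have hc2nn : ∀ n, (0:ℝ) ≤ l * α n := fun n => mul_nonneg hl0.le (hα0 n)
  have hc3nn : ∀ n, (0:ℝ) ≤ l * (α n) ^ 2 := fun n => mul_nonneg hl0.le (sq_nonneg _)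
  have hc4nn : (0:ℝ) ≤ 1 - l := by linarith
  -- membership of the sequence
  have hxC : ∀ n, x n ∈ C := by
    intro n
    induction n with
    | zero => exact hx0
    | succ n ih =>
      rw [hrec n]
      have hmem := hconv.sum_mem (t := (Finset.univ : Finset (Fin 4)))
        (w := ![l * (1 - α n - (α n) ^ 2), l * α n, l * (α n) ^ 2, 1 - l])
        (z := ![T₁ (x n), T₂ (x n), T₃ (x n), x n])
        (by
          intro i _
          fin_cases i <;> simp <;>
            nlinarith [hc1nn n, hc2nn n, hc3nn n, hl0, hl1, hα0 n, sq_nonneg (α n), hquarter n])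
        (by
          rw [Fin.sum_univ_four]
          simp
          ring)
        (by
          intro i _
          fin_cases i <;> simp [hT₁ ih, hT₂ ih, hT₃ ih, ih])
      rw [Fin.sum_univ_four] at hmem
      simpa using hmem
  -- common fixed point p
  set F₁ : Set X := {p : X | p ∈ C ∧ T₁ p = p} with hF₁def
  have hF₁closed : IsClosed F₁ := fixedSet_isClosed hcomp hγ0 hγhalf hμ0 hμγ hB₁'
  have hF₁comp : IsCompact F₁ := hcomp.of_isClosed_subset hF₁closed (fun p hp => hp.1)
  have hF₁ne : F₁.Nonempty := by
    obtain ⟨z, hz, hfix⟩ := condB_exists_fixed hcomp hne hγ0 hγhalf hμ0 hμγ hT₁ hB₁'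
    exact ⟨z, hz, hfix⟩
  have hT₂F₁ : Set.MapsTo T₂ F₁ F₁ := by
    intro p hp
    exact ⟨hT₂ hp.1, by rw [h12 p hp.1, hp.2]⟩
  have hB₂F₁ : CondB F₁ T₂ γ μ := fun a ha b hb => hB₂' a ha.1 b hb.1
  set F₂ : Set X := {p : X | p ∈ F₁ ∧ T₂ p = p} with hF₂def
  have hF₂closed : IsClosed F₂ := by
    have := fixedSet_isClosed (C := F₁) hF₁comp hγ0 hγhalf hμ0 hμγ hB₂F₁
    exact this
  have hF₂comp : IsCompact F₂ := hF₁comp.of_isClosed_subset hF₂closed (fun p hp => hp.1)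
  have hF₂ne : F₂.Nonempty := by
    obtain ⟨z, hz, hfix⟩ := condB_exists_fixed hF₁comp hF₁ne hγ0 hγhalf hμ0 hμγ hT₂F₁ hB₂F₁
    exact ⟨z, hz, hfix⟩
  have hT₃F₂ : Set.MapsTo T₃ F₂ F₂ := by
    intro p hp
    refine ⟨⟨hT₃ hp.1.1, ?_⟩, ?_⟩
    · rw [h13 p hp.1.1, hp.1.2]
    · rw [h23 p hp.1.1, hp.2]
  have hB₃F₂ : CondB F₂ T₃ γ μ := fun a ha b hb => hB₃' a ha.1.1 b hb.1.1
  obtain ⟨p, hpF₂, hp3⟩ := condB_exists_fixed hF₂comp hF₂ne hγ0 hγhalf hμ0 hμγ hT₃F₂ hB₃F₂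
  have hpC : p ∈ C := hpF₂.1.1
  have hp1 : T₁ p = p := hpF₂.1.2
  have hp2 : T₂ p = p := hpF₂.2
  -- monotonicity of distances to any common fixed point
  have hmono : ∀ q, q ∈ C → T₁ q = q → T₂ q = q → T₃ q = q →
      ∀ n, ‖x (n + 1) - q‖ ≤ ‖x n - q‖ := by
    intro q hq hq1 hq2 hq3 n
    have e : x (n + 1) - q = (l * (1 - α n - (α n) ^ 2)) • (T₁ (x n) - q)
        + (l * α n) • (T₂ (x n) - q) + (l * (α n) ^ 2) • (T₃ (x n) - q)
        + (1 - l) • (x n - q) := by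
      rw [hrec n]; module
    have b1 : ‖T₁ (x n) - q‖ ≤ ‖x n - q‖ :=
      condB_fixed_quasi hγ0 hγhalf hμ0 hμγ hB₁' hq hq1 (hxC n)
    have b2 : ‖T₂ (x n) - q‖ ≤ ‖x n - q‖ :=
      condB_fixed_quasi hγ0 hγhalf hμ0 hμγ hB₂' hq hq2 (hxC n)
    have b3 : ‖T₃ (x n) - q‖ ≤ ‖x n - q‖ :=
      condB_fixed_quasi hγ0 hγhalf hμ0 hμγ hB₃' hq hq3 (hxC n)
    have hc1 : (0:ℝ) ≤ l * (1 - α n - (α n) ^ 2) := hc1nn n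
    have hc2 : (0:ℝ) ≤ l * α n := hc2nn n
    have hc3 : (0:ℝ) ≤ l * (α n) ^ 2 := hc3nn n
    have hc4 : (0:ℝ) ≤ 1 - l := hc4nn
    rw [e]
    have tri : ‖(l * (1 - α n - (α n) ^ 2)) • (T₁ (x n) - q)
        + (l * α n) • (T₂ (x n) - q) + (l * (α n) ^ 2) • (T₃ (x n) - q)
        + (1 - l) • (x n - q)‖ ≤
        (l * (1 - α n - (α n) ^ 2)) * ‖T₁ (x n) - q‖ + (l * α n) * ‖T₂ (x n) - q‖
        + (l * (α n) ^ 2) * ‖T₃ (x n) - q‖ + (1 - l) * ‖x n - q‖ := by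
      have t1 := norm_add_le ((l * (1 - α n - (α n) ^ 2)) • (T₁ (x n) - q))
        ((l * α n) • (T₂ (x n) - q))
      have t2 := norm_add_le ((l * (1 - α n - (α n) ^ 2)) • (T₁ (x n) - q)
        + (l * α n) • (T₂ (x n) - q)) ((l * (α n) ^ 2) • (T₃ (x n) - q))
      have t3 := norm_add_le ((l * (1 - α n - (α n) ^ 2)) • (T₁ (x n) - q)
        + (l * α n) • (T₂ (x n) - q) + (l * (α n) ^ 2) • (T₃ (x n) - q))
        ((1 - l) • (x n - q))
      rw [norm_smul_of_nonneg hc1, norm_smul_of_nonneg hc2, norm_smul_of_nonneg hc3,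
        norm_smul_of_nonneg hc4] at *
      linarith
    have : (l * (1 - α n - (α n) ^ 2)) * ‖T₁ (x n) - q‖ + (l * α n) * ‖T₂ (x n) - q‖
        + (l * (α n) ^ 2) * ‖T₃ (x n) - q‖ + (1 - l) * ‖x n - q‖ ≤ ‖x n - q‖ := by
      nlinarith [mul_le_mul_of_nonneg_left b1 hc1, mul_le_mul_of_nonneg_left b2 hc2,
        mul_le_mul_of_nonneg_left b3 hc3]
    linarith
  -- reduction: it suffices to find a common fixed point approached by the sequence
  suffices hzex : ∃ z, z ∈ C ∧ T₁ z = z ∧ T₂ z = z ∧ T₃ z = z ∧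
      ∀ ε : ℝ, 0 < ε → ∃ N, ‖x N - z‖ < ε by
    obtain ⟨z, hzC, hz1, hz2, hz3, hzap⟩ := hzex
    refine ⟨z, hzC, hz1, hz2, hz3, ?_⟩
    have hanti : Antitone (fun n => ‖x n - z‖) :=
      antitone_nat_of_succ_le (hmono z hzC hz1 hz2 hz3)
    rw [Metric.tendsto_atTop]
    intro ε hε
    obtain ⟨N, hN⟩ := hzap ε hε
    refine ⟨N, fun n hn => ?_⟩
    rw [dist_eq_norm]
    exact lt_of_le_of_lt (hanti hn) hN
  -- distances to the common fixed point p
  have hRanti : Antitone (fun n => ‖x n - p‖) :=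
    antitone_nat_of_succ_le (hmono p hpC hp1 hp2 hp3)
  have hRnn : ∀ n, 0 ≤ ‖x n - p‖ := fun n => norm_nonneg _
  have hRbdd : BddBelow (Set.range (fun n => ‖x n - p‖)) :=
    ⟨0, by rintro _ ⟨n, rfl⟩; exact hRnn n⟩
  have hr0 : 0 ≤ ⨅ n, ‖x n - p‖ := le_ciInf hRnn
  have hrle : ∀ n, (⨅ n, ‖x n - p‖) ≤ ‖x n - p‖ := fun n => ciInf_le hRbdd n
  rcases eq_or_lt_of_le hr0 with hreq | hrpos
  · -- infimum is zero : the sequence converges to p itself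
    refine ⟨p, hpC, hp1, hp2, hp3, ?_⟩
    intro ε hε
    exact exists_lt_of_ciInf_lt (show (⨅ n, ‖x n - p‖) < ε by rw [← hreq]; exact hε)
  · -- positive infimum : uniform convexity argument
    set r : ℝ := ⨅ n, ‖x n - p‖ with hrdef
    set c' : ℝ := min (Filter.limsup α Filter.atTop / 2) (1/2) with hc'def
    have hc'pos : 0 < c' := lt_min (by linarith) (by norm_num)
    have hc'le1 : c' ≤ 1 := le_trans (min_le_right _ _) (by norm_num)
    have hcobdd : Filter.IsCoboundedUnder (· ≤ ·) Filter.atTop α :=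
      Filter.isCoboundedUnder_le_of_le Filter.atTop (x := 0) hα0
    have hfreq : ∃ᶠ n in Filter.atTop, c' < α n := by
      apply Filter.frequently_lt_of_lt_limsup hcobdd
      calc c' ≤ Filter.limsup α Filter.atTop / 2 := min_le_left _ _
        _ < Filter.limsup α Filter.atTop := by linarith
    set δ₀ : ℝ := min (min (l * c' ^ 2) (l / 4)) (1 - l) with hδ₀def
    have hδ₀pos : 0 < δ₀ := lt_min (lt_min (by positivity) (by positivity)) (by linarith)
    have hkey : ∀ η : ℝ, 0 < η → ∀ M : ℕ, ∃ n, M ≤ n ∧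
        ‖T₁ (x n) - x n‖ ≤ η ∧ ‖T₂ (x n) - x n‖ ≤ η ∧ ‖T₃ (x n) - x n‖ ≤ η := by
      intro η hη M
      obtain ⟨ε, hεpos, hUC⟩ := uc_pair (X := X) hrpos hη hδ₀pos
      obtain ⟨N₀, hN₀⟩ := exists_lt_of_ciInf_lt
        (show (⨅ n, ‖x n - p‖) < r + ε by rw [← hrdef]; linarith)
      obtain ⟨n, hnα, hnge⟩ :=
        (hfreq.and_eventually (Filter.eventually_ge_atTop (max M N₀))).exists
      have hnM : M ≤ n := le_trans (le_max_left _ _) hnge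
      have hnN₀ : N₀ ≤ n := le_trans (le_max_right _ _) hnge
      have hRn : ‖x n - p‖ ≤ r + ε := le_trans (hRanti hnN₀) hN₀.le
      have hRn1 : r - ε ≤ ‖x (n+1) - p‖ := by
        have := hrle (n+1); linarith
      -- coefficient lower bounds
      have hαc : c' ≤ α n := hnα.le
      have hc₁δ : δ₀ ≤ l * (1 - α n - (α n) ^ 2) := by
        have h1 : δ₀ ≤ l / 4 := le_trans (min_le_left _ _) (min_le_right _ _)
        nlinarith [hquarter n, hl0]
      have hc₂δ : δ₀ ≤ l * α n := by
        have h1 : δ₀ ≤ l * c' ^ 2 := le_trans (min_le_left _ _) (min_le_left _ _)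
        have h2 : c' ^ 2 ≤ α n := by nlinarith [hc'pos.le, hc'le1, hαc]
        have h3 : l * c' ^ 2 ≤ l * α n := mul_le_mul_of_nonneg_left h2 hl0.le
        linarith
      have hc₃δ : δ₀ ≤ l * (α n) ^ 2 := by
        have h1 : δ₀ ≤ l * c' ^ 2 := le_trans (min_le_left _ _) (min_le_left _ _)
        have h2 : c' ^ 2 ≤ (α n) ^ 2 := by nlinarith [hc'pos.le, hαc]
        have h3 : l * c' ^ 2 ≤ l * (α n) ^ 2 := mul_le_mul_of_nonneg_left h2 hl0.le
        linarith
      have hc₄δ : δ₀ ≤ 1 - l := min_le_right _ _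
      -- norm bounds
      have hu1 : ‖T₁ (x n) - p‖ ≤ r + ε :=
        le_trans (condB_fixed_quasi hγ0 hγhalf hμ0 hμγ hB₁' hpC hp1 (hxC n)) hRn
      have hu2 : ‖T₂ (x n) - p‖ ≤ r + ε :=
        le_trans (condB_fixed_quasi hγ0 hγhalf hμ0 hμγ hB₂' hpC hp2 (hxC n)) hRn
      have hu3 : ‖T₃ (x n) - p‖ ≤ r + ε :=
        le_trans (condB_fixed_quasi hγ0 hγhalf hμ0 hμγ hB₃' hpC hp3 (hxC n)) hRn
      have hu4 : ‖x n - p‖ ≤ r + ε := hRn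
      have hrε : (0:ℝ) ≤ r + ε := by linarith
      -- pair (T₁, id)
      have d1 : ‖T₁ (x n) - x n‖ ≤ η := by
        have e1 : x (n+1) - p = (l * (1 - α n - (α n) ^ 2)) • (T₁ (x n) - p)
            + (1 - l) • (x n - p)
            + ((l * α n) • (T₂ (x n) - p) + (l * (α n) ^ 2) • (T₃ (x n) - p)) := by
          rw [hrec n]; module
        have hw : ‖(l * α n) • (T₂ (x n) - p) + (l * (α n) ^ 2) • (T₃ (x n) - p)‖ ≤
            (1 - ((l * (1 - α n - (α n) ^ 2)) + (1 - l))) * (r + ε) := by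
          have ht := norm_add_le ((l * α n) • (T₂ (x n) - p)) ((l * (α n) ^ 2) • (T₃ (x n) - p))
          rw [norm_smul_of_nonneg (hc2nn n), norm_smul_of_nonneg (hc3nn n)] at ht
          have he : 1 - ((l * (1 - α n - (α n) ^ 2)) + (1 - l)) = l * α n + l * (α n) ^ 2 := by
            ring
          rw [he]
          nlinarith [mul_le_mul_of_nonneg_left hu2 (hc2nn n),
            mul_le_mul_of_nonneg_left hu3 (hc3nn n)]
        have hres := hUC (T₁ (x n) - p) (x n - p) _ _ _ hc₁δ hc₄δ
          (by nlinarith [hc2nn n, hc3nn n]) hu1 hu4 hw (by rw [← e1]; exact hRn1)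
        have : T₁ (x n) - p - (x n - p) = T₁ (x n) - x n := by abel
        rwa [this] at hres
      -- pair (T₂, id)
      have d2 : ‖T₂ (x n) - x n‖ ≤ η := by
        have e2 : x (n+1) - p = (l * α n) • (T₂ (x n) - p)
            + (1 - l) • (x n - p)
            + ((l * (1 - α n - (α n) ^ 2)) • (T₁ (x n) - p)
              + (l * (α n) ^ 2) • (T₃ (x n) - p)) := by
          rw [hrec n]; module
        have hw : ‖(l * (1 - α n - (α n) ^ 2)) • (T₁ (x n) - p)
            + (l * (α n) ^ 2) • (T₃ (x n) - p)‖ ≤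
            (1 - ((l * α n) + (1 - l))) * (r + ε) := by
          have ht := norm_add_le ((l * (1 - α n - (α n) ^ 2)) • (T₁ (x n) - p))
            ((l * (α n) ^ 2) • (T₃ (x n) - p))
          rw [norm_smul_of_nonneg (hc1nn n), norm_smul_of_nonneg (hc3nn n)] at ht
          have he : 1 - ((l * α n) + (1 - l)) =
              l * (1 - α n - (α n) ^ 2) + l * (α n) ^ 2 := by ring
          rw [he]
          nlinarith [mul_le_mul_of_nonneg_left hu1 (hc1nn n),
            mul_le_mul_of_nonneg_left hu3 (hc3nn n)]
        have hres := hUC (T₂ (x n) - p) (x n - p) _ _ _ hc₂δ hc₄δ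
          (by nlinarith [hc1nn n, hc3nn n]) hu2 hu4 hw (by rw [← e2]; exact hRn1)
        have : T₂ (x n) - p - (x n - p) = T₂ (x n) - x n := by abel
        rwa [this] at hres
      -- pair (T₃, id)
      have d3 : ‖T₃ (x n) - x n‖ ≤ η := by
        have e3 : x (n+1) - p = (l * (α n) ^ 2) • (T₃ (x n) - p)
            + (1 - l) • (x n - p)
            + ((l * (1 - α n - (α n) ^ 2)) • (T₁ (x n) - p)
              + (l * α n) • (T₂ (x n) - p)) := by
          rw [hrec n]; module
        have hw : ‖(l * (1 - α n - (α n) ^ 2)) • (T₁ (x n) - p)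
            + (l * α n) • (T₂ (x n) - p)‖ ≤
            (1 - ((l * (α n) ^ 2) + (1 - l))) * (r + ε) := by
          have ht := norm_add_le ((l * (1 - α n - (α n) ^ 2)) • (T₁ (x n) - p))
            ((l * α n) • (T₂ (x n) - p))
          rw [norm_smul_of_nonneg (hc1nn n), norm_smul_of_nonneg (hc2nn n)] at ht
          have he : 1 - ((l * (α n) ^ 2) + (1 - l)) =
              l * (1 - α n - (α n) ^ 2) + l * α n := by ring
          rw [he]
          nlinarith [mul_le_mul_of_nonneg_left hu1 (hc1nn n),
            mul_le_mul_of_nonneg_left hu2 (hc2nn n)]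
        have hres := hUC (T₃ (x n) - p) (x n - p) _ _ _ hc₃δ hc₄δ
          (by nlinarith [hc1nn n, hc2nn n]) hu3 hu4 hw (by rw [← e3]; exact hRn1)
        have : T₃ (x n) - p - (x n - p) = T₃ (x n) - x n := by abel
        rwa [this] at hres
      exact ⟨n, hnM, d1, d2, d3⟩
    -- build the subsequence
    have hchoice : ∀ j : ℕ, ∃ n, j ≤ n ∧
        ‖T₁ (x n) - x n‖ ≤ 1/((j:ℝ)+1) ∧ ‖T₂ (x n) - x n‖ ≤ 1/((j:ℝ)+1) ∧
        ‖T₃ (x n) - x n‖ ≤ 1/((j:ℝ)+1) :=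
      fun j => hkey (1/((j:ℝ)+1)) (by positivity) j
    choose f hf0 hf1 hf2 hf3 using hchoice
    obtain ⟨z, hzC, ψ, hψ, hψlim⟩ :=
      hcomp.tendsto_subseq (x := fun j => x (f j)) (fun j => hxC (f j))
    have hylim : Filter.Tendsto (fun j => x (f (ψ j))) Filter.atTop (nhds z) := hψlim
    have hyC : ∀ j, x (f (ψ j)) ∈ C := fun j => hxC _
    have hbound : ∀ j : ℕ, (1:ℝ)/((ψ j : ℝ) + 1) ≤ 1/((j:ℝ)+1) := by
      intro j
      apply one_div_le_one_div_of_le (by positivity)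
      have hj : j ≤ ψ j := hψ.le_apply
      have hj' : (j:ℝ) ≤ (ψ j : ℝ) := by exact_mod_cast hj
      linarith
    have hdt : ∀ (T : X → X), (∀ m, ‖T (x (f m)) - x (f m)‖ ≤ 1/((m:ℝ)+1)) →
        Filter.Tendsto (fun j => ‖x (f (ψ j)) - T (x (f (ψ j)))‖) Filter.atTop (nhds 0) := by
      intro T hT
      apply squeeze_zero (fun j => norm_nonneg _) (fun j => ?_)
        tendsto_one_div_add_atTop_nhds_zero_nat
      rw [norm_sub_rev]
      exact le_trans (hT (ψ j)) (hbound j)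
    have hz1 : T₁ z = z := condB_demiclosed hγ0 hγhalf hμ0 hμγ hT₁ hB₁' hyC hzC hylim
      (hdt T₁ hf1)
    have hz2 : T₂ z = z := condB_demiclosed hγ0 hγhalf hμ0 hμγ hT₂ hB₂' hyC hzC hylim
      (hdt T₂ hf2)
    have hz3 : T₃ z = z := condB_demiclosed hγ0 hγhalf hμ0 hμγ hT₃ hB₃' hyC hzC hylim
      (hdt T₃ hf3)
    refine ⟨z, hzC, hz1, hz2, hz3, ?_⟩
    intro ε hε
    obtain ⟨J, hJ⟩ := (Metric.tendsto_atTop.mp hylim) ε hε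
    refine ⟨f (ψ J), ?_⟩
    have := hJ J (le_refl J)
    rwa [dist_eq_norm] at this
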